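/- arXiv:2405.05779 — 3 statements merged into one kernel-verified Lean document; each statement's English description precedes it below -/
import Mathlib

section
/- If I is a linear order and for each i ∈ I, L_i and L'_i are linear orders with L_i ≡_k L'_i (i.e., they satisfy the same first-order sentences in the language {<} of quantifier rank at most k), then the ordered sums ∑_{i∈I} L_i and ∑_{i∈I} L'_i satisfy ∑_{i∈I} L_i ≡_k ∑_{i∈I} L'_i. -/
open FirstOrder Language Ordinal

attribute [local instance] FirstOrder.Language.orderStructure

/-- Quantifier rank of a bounded formula. -/
def qr {α : Type*} : ∀ {n : ℕ}, Language.order.BoundedFormula α n → ℕ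
  | _, .falsum => 0
  | _, .equal _ _ => 0
  | _, .rel _ _ => 0
  | _, .imp f g => max (qr f) (qr g)
  | _, .all f => qr f + 1

/-- `M ≡ₖ N` : the linear orders `M` and `N` satisfy the same
first-order sentences of the language of orders of quantifier rank `≤ k`. -/
def EqRk (k : ℕ) (M : Type*) (N : Type*) [LinearOrder M] [LinearOrder N] : Prop :=
  ∀ φ : Language.order.Sentence, qr φ ≤ k → (M ⊨ φ ↔ N ⊨ φ)

namespace EFAux

attribute [local instance] Classical.propDecidable

/-- abbreviation for order bounded formulas with no free constants -/
abbrev Fm (n : ℕ) : Type := Language.order.BoundedFormula Empty n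

def nt {n : ℕ} (f : Fm n) : Fm n := f.imp .falsum

def listConj {n : ℕ} : List (Fm n) → Fm n
  | [] => nt .falsum
  | f :: l => nt (f.imp (nt (listConj l)))

def listDisj {n : ℕ} : List (Fm n) → Fm n
  | [] => .falsum
  | f :: l => (nt f).imp (listDisj l)

def ex' {n : ℕ} (f : Fm (n + 1)) : Fm n := nt (.all (nt f))

@[simp] lemma realize_falsum {M : Type*} [LinearOrder M] {n : ℕ} (v : Empty → M)
    (xs : Fin n → M) : (BoundedFormula.falsum : Fm n).Realize v xs ↔ False := Iff.rfl

@[simp] lemma qr_nt {n : ℕ} (f : Fm n) : qr (nt f) = qr f := by simp [nt, qr]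

lemma qr_listConj {n : ℕ} {m : ℕ} (l : List (Fm n)) (h : ∀ f ∈ l, qr f ≤ m) :
    qr (listConj l) ≤ m := by
  induction l with
  | nil => simp [listConj, qr]
  | cons f l ih =>
      simp only [listConj, qr_nt, qr, max_le_iff]
      exact ⟨h f (by simp), ih (fun g hg => h g (by simp [hg]))⟩

lemma qr_listDisj {n : ℕ} {m : ℕ} (l : List (Fm n)) (h : ∀ f ∈ l, qr f ≤ m) :
    qr (listDisj l) ≤ m := by
  induction l with
  | nil => simp [listDisj, qr]
  | cons f l ih =>
      simp only [listDisj, qr_nt, qr, max_le_iff]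
      exact ⟨h f (by simp), ih fun g hg => h g (by simp [hg])⟩

@[simp] lemma qr_ex' {n : ℕ} (f : Fm (n + 1)) : qr (ex' f) = qr f + 1 := by
  simp [ex', qr]

section realize

variable {M : Type*} [LinearOrder M]

@[simp] lemma realize_nt {n : ℕ} (f : Fm n) (v : Empty → M) (xs : Fin n → M) :
    (nt f).Realize v xs ↔ ¬ f.Realize v xs := by
  simp [nt]

lemma realize_listConj {n : ℕ} (l : List (Fm n)) (v : Empty → M) (xs : Fin n → M) :
    (listConj l).Realize v xs ↔ ∀ f ∈ l, f.Realize v xs := by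
  induction l with
  | nil => simp [listConj]
  | cons f l ih => simp [listConj, ih]

lemma realize_listDisj {n : ℕ} (l : List (Fm n)) (v : Empty → M) (xs : Fin n → M) :
    (listDisj l).Realize v xs ↔ ∃ f ∈ l, f.Realize v xs := by
  induction l with
  | nil => simp [listDisj]
  | cons f l ih => by_cases hf : f.Realize v xs <;> simp [listDisj, ih, hf]

lemma realize_ex' {n : ℕ} (f : Fm (n + 1)) (v : Empty → M) (xs : Fin n → M) :
    (ex' f).Realize v xs ↔ ∃ a : M, f.Realize v (Fin.snoc xs a) := by
  simp [ex']

end realize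

section eqv

/-- extend a tuple by one element, indexed by `Option α` -/
def ext {α : Type} {M : Type*} (x : α → M) (c : M) : Option α → M :=
  fun o => o.elim c x

@[simp] lemma ext_none {α : Type} {M : Type*} (x : α → M) (c : M) : ext x c none = c := rfl
@[simp] lemma ext_some {α : Type} {M : Type*} (x : α → M) (c : M) (a : α) :
    ext x c (some a) = x a := rfl

lemma ext_comp_map {α β : Type} {M : Type*} (x : α → M) (c : M) (f : β → α) :
    ext x c ∘ Option.map f = ext (x ∘ f) c := by
  funext o; cases o <;> rfl

variable (M : Type*) (N : Type*) [LinearOrder M] [LinearOrder N]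

/-- `m`-round Ehrenfeucht–Fraïssé equivalence of tuples. -/
def Eqv : ℕ → (α : Type) → (α → M) → (α → N) → Prop
  | 0, _, x, y => ∀ a b, x a ≤ x b ↔ y a ≤ y b
  | m+1, α, x, y => (∀ a b, x a ≤ x b ↔ y a ≤ y b) ∧
      (∀ c : M, ∃ d : N, Eqv m (Option α) (ext x c) (ext y d)) ∧
      (∀ d : N, ∃ c : M, Eqv m (Option α) (ext x c) (ext y d))

variable {M N}

lemma eqv_atomic {m : ℕ} {α : Type} {x : α → M} {y : α → N} (h : Eqv M N m α x y) :
    ∀ a b, x a ≤ x b ↔ y a ≤ y b := by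
  cases m with
  | zero => exact h
  | succ m => exact h.1

lemma eqv_atomic_eq {m : ℕ} {α : Type} {x : α → M} {y : α → N} (h : Eqv M N m α x y)
    (a b : α) : x a = x b ↔ y a = y b := by
  rw [le_antisymm_iff, le_antisymm_iff, eqv_atomic h a b, eqv_atomic h b a]

lemma eqv_comp {m : ℕ} {α β : Type} {x : α → M} {y : α → N} (h : Eqv M N m α x y)
    (f : β → α) : Eqv M N m β (x ∘ f) (y ∘ f) := by
  induction m generalizing α β with
  | zero => exact fun a b => h (f a) (f b)
  | succ m ih =>
      refine ⟨fun a b => h.1 (f a) (f b), fun c => ?_, fun d => ?_⟩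
      · obtain ⟨d, hd⟩ := h.2.1 c
        exact ⟨d, by simpa [ext_comp_map] using ih hd (Option.map f)⟩
      · obtain ⟨c, hc⟩ := h.2.2 d
        exact ⟨c, by simpa [ext_comp_map] using ih hc (Option.map f)⟩

lemma eqv_mono {m : ℕ} {α : Type} {x : α → M} {y : α → N} (h : Eqv M N (m+1) α x y) :
    Eqv M N m α x y := by
  induction m generalizing α with
  | zero => exact h.1
  | succ m ih =>
      refine ⟨h.1, fun c => ?_, fun d => ?_⟩
      · obtain ⟨d, hd⟩ := h.2.1 c
        exact ⟨d, ih hd⟩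
      · obtain ⟨c, hc⟩ := h.2.2 d
        exact ⟨c, ih hc⟩

end eqv

section bridge

instance (priority := 100) ordStr {M : Type*} [LE M] : Language.order.OrderedStructure M :=
  ⟨fun _ => Iff.rfl⟩

variable {M : Type*} {N : Type*} [LinearOrder M] [LinearOrder N]

lemma term_eq_var {β : Type*} (t : Language.order.Term β) : ∃ v, t = Term.var v := by
  cases t with
  | var v => exact ⟨v, rfl⟩
  | func f ts => exact isEmptyElim f

/-- the reindexing map `Fin (n+1) → Option (Fin n)` sending `last` to `none` -/
def lc {k : ℕ} : Fin (k+1) → Option (Fin k) := fun i => Fin.lastCases none some i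

omit [LinearOrder M] in
lemma ext_comp_lastCases {n : ℕ} (x : Fin n → M) (c : M) :
    (ext x c) ∘ (lc (k := n)) = Fin.snoc x c := by
  funext i
  induction i using Fin.lastCases with
  | last => simp [lc]
  | cast j => simp [lc]

omit [LinearOrder M] in
lemma snoc_comp_elim {n : ℕ} (x : Fin n → M) (c : M) :
    (Fin.snoc x c : Fin (n+1) → M) ∘ (fun o : Option (Fin n) => o.elim (Fin.last n) Fin.castSucc)
      = ext x c := by
  funext o
  cases o with
  | none => simp
  | some j => simp

theorem realize_of_eqv : ∀ {n : ℕ} (φ : Fm n) (m : ℕ), qr φ ≤ m →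
    ∀ (x : Fin n → M) (y : Fin n → N), Eqv M N m (Fin n) x y →
    (φ.Realize default x ↔ φ.Realize default y) := by
  intro n φ
  induction φ with
  | falsum => intro m _ x y _; simp
  | equal t₁ t₂ =>
      intro m _ x y h
      obtain ⟨v₁, rfl⟩ := term_eq_var t₁
      obtain ⟨v₂, rfl⟩ := term_eq_var t₂
      cases v₁ with
      | inl e => exact e.elim
      | inr i =>
          cases v₂ with
          | inl e => exact e.elim
          | inr j => exact eqv_atomic_eq h i j
  | rel R ts =>
      intro m _ x y h
      cases R
      obtain ⟨v₀, h₀⟩ := term_eq_var (ts 0)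
      obtain ⟨v₁, h₁⟩ := term_eq_var (ts 1)
      cases v₀ with
      | inl e => exact e.elim
      | inr i =>
          cases v₁ with
          | inl e => exact e.elim
          | inr j =>
              have gx : (BoundedFormula.rel orderRel.le ts).Realize (default : Empty → M) x
                  ↔ x i ≤ x j := by
                have h2 : (BoundedFormula.rel orderRel.le ts).Realize (default : Empty → M) x
                    ↔ Term.realize (Sum.elim (default : Empty → M) x) (ts 0)
                      ≤ Term.realize (Sum.elim (default : Empty → M) x) (ts 1) := Iff.rfl
                rw [h2, h₀, h₁]
                simp
              have gy : (BoundedFormula.rel orderRel.le ts).Realize (default : Empty → N) y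
                  ↔ y i ≤ y j := by
                have h2 : (BoundedFormula.rel orderRel.le ts).Realize (default : Empty → N) y
                    ↔ Term.realize (Sum.elim (default : Empty → N) y) (ts 0)
                      ≤ Term.realize (Sum.elim (default : Empty → N) y) (ts 1) := Iff.rfl
                rw [h2, h₀, h₁]
                simp
              rw [gx, gy]
              exact eqv_atomic h i j
  | imp f g ihf ihg =>
      intro m hm x y h
      have hm' : max (qr f) (qr g) ≤ m := hm
      simp only [BoundedFormula.realize_imp]
      exact imp_congr (ihf m (le_trans (le_max_left _ _) hm') x y h)
        (ihg m (le_trans (le_max_right _ _) hm') x y h)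
  | all f ihf =>
      intro m hm x y h
      have hm1 : qr f + 1 ≤ m := hm
      obtain ⟨m, rfl⟩ : ∃ m', m = m' + 1 := ⟨m - 1, by omega⟩
      simp only [BoundedFormula.realize_all]
      constructor
      · intro hx b
        obtain ⟨c, hc⟩ := h.2.2 b
        have := eqv_comp hc lc
        rw [ext_comp_lastCases, ext_comp_lastCases] at this
        exact (ihf m (by omega) _ _ this).1 (hx c)
      · intro hy a
        obtain ⟨d, hd⟩ := h.2.1 a
        have := eqv_comp hd lc
        rw [ext_comp_lastCases, ext_comp_lastCases] at this
        exact (ihf m (by omega) _ _ this).2 (hy d)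

end bridge

section hintikka

/-- abstract `m`-types over `n` variables -/
def TT : ℕ → ℕ → Type
  | 0, n => Fin n → Fin n → Bool
  | m+1, n => (Fin n → Fin n → Bool) × Finset (TT m (n+1))

lemma ttFinite : ∀ (m n : ℕ), Finite (TT m n)
  | 0, n => by unfold TT; infer_instance
  | m+1, n => by
      unfold TT
      have h1 : Finite (TT m (n+1)) := ttFinite m (n+1)
      have h2 := Fintype.ofFinite (TT m (n+1))
      have h3 : DecidableEq (TT m (n+1)) := Classical.decEq _
      infer_instance

/-- atomic formula or its negation -/
def atomF {n : ℕ} (b : Bool) (i j : Fin n) : Fm n :=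
  if b then (BoundedFormula.rel orderRel.le ![Term.var (Sum.inr i), Term.var (Sum.inr j)] : Fm n)
  else nt (BoundedFormula.rel orderRel.le ![Term.var (Sum.inr i), Term.var (Sum.inr j)] : Fm n)

@[simp] lemma qr_atomF {n : ℕ} (b : Bool) (i j : Fin n) : qr (atomF b i j) = 0 := by
  cases b <;> simp [atomF, qr]

lemma realize_atomF {M : Type*} [LinearOrder M] {n : ℕ} (b : Bool) (i j : Fin n)
    (x : Fin n → M) :
    (atomF b i j).Realize (default : Empty → M) x ↔ (if b then x i ≤ x j else ¬ x i ≤ x j) := by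
  have base : (BoundedFormula.rel orderRel.le
      ![Term.var (Sum.inr i), Term.var (Sum.inr j)] : Fm n).Realize (default : Empty → M) x
      ↔ x i ≤ x j := Iff.rfl
  cases b
  · simpa [atomF] using base.not
  · simpa [atomF] using base

/-- the type of a tuple -/
noncomputable def typeOf (M : Type*) [LinearOrder M] : ∀ (m : ℕ) {n : ℕ}, (Fin n → M) → TT m n
  | 0, _, x => fun i j => decide (x i ≤ x j)
  | m+1, n, x => (fun i j => decide (x i ≤ x j),
      haveI := ttFinite m (n+1)
      Set.Finite.toFinset (Set.toFinite (Set.range (fun a : M => typeOf M m (Fin.snoc x a)))))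

/-- all pairs of indices -/
def pairs (n : ℕ) : List (Fin n × Fin n) :=
  (List.finRange n).flatMap (fun i => (List.finRange n).map (fun j => (i, j)))

lemma mem_pairs {n : ℕ} (p : Fin n × Fin n) : p ∈ pairs n := by
  obtain ⟨i, j⟩ := p
  simp [pairs, List.mem_flatMap]

/-- the atomic part of a Hintikka formula -/
def atomBlock {n : ℕ} (t0 : Fin n → Fin n → Bool) : Fm n :=
  listConj ((pairs n).map fun p => atomF (t0 p.1 p.2) p.1 p.2)

lemma qr_atomBlock {n : ℕ} (t0 : Fin n → Fin n → Bool) : qr (atomBlock t0) ≤ 0 :=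
  qr_listConj _ (by
    intro f hf
    simp only [List.mem_map] at hf
    obtain ⟨p, -, rfl⟩ := hf
    simp)

lemma realize_atomBlock {N : Type*} [LinearOrder N] {n : ℕ} (t0 : Fin n → Fin n → Bool)
    (y : Fin n → N) :
    (atomBlock t0).Realize (default : Empty → N) y ↔
      ∀ i j : Fin n, (t0 i j = true ↔ y i ≤ y j) := by
  rw [atomBlock, realize_listConj]
  constructor
  · intro hr i j
    have := hr _ (List.mem_map_of_mem (mem_pairs (i, j)))
    rw [realize_atomF] at this
    cases hb : t0 i j <;> simp [hb] at this <;> simp [hb, this]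
  · intro ha f hf
    simp only [List.mem_map] at hf
    obtain ⟨p, -, rfl⟩ := hf
    rw [realize_atomF]
    cases hb : t0 p.1 p.2
    · rw [if_neg (by simp)]
      intro hle
      exact absurd ((ha p.1 p.2).2 hle) (by simp [hb])
    · rw [if_pos rfl]
      exact (ha p.1 p.2).1 hb

/-- the Hintikka formula of an abstract type -/
noncomputable def toFormula : ∀ (m : ℕ) {n : ℕ}, TT m n → Fm n
  | 0, _, t => atomBlock t
  | m+1, n, t =>
      listConj [atomBlock t.1,
        listConj (t.2.toList.map fun s => ex' (toFormula m s)),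
        .all (listDisj (t.2.toList.map fun s => toFormula m s))]

lemma qr_toFormula : ∀ (m : ℕ) {n : ℕ} (t : TT m n), qr (toFormula m t) ≤ m
  | 0, n, t => qr_atomBlock t
  | m+1, n, t => by
      refine qr_listConj _ ?_
      intro f hf
      simp only [List.mem_cons, List.not_mem_nil, or_false] at hf
      rcases hf with rfl | rfl | rfl
      · exact le_trans (qr_atomBlock _) (Nat.zero_le _)
      · refine qr_listConj _ ?_
        intro g hg
        simp only [List.mem_map] at hg
        obtain ⟨s, -, rfl⟩ := hg
        rw [qr_ex']
        exact Nat.add_le_add_right (qr_toFormula m s) 1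
      · show qr (listDisj _) + 1 ≤ m + 1
        refine Nat.add_le_add_right (qr_listDisj _ ?_) 1
        intro g hg
        simp only [List.mem_map] at hg
        obtain ⟨s, -, rfl⟩ := hg
        exact qr_toFormula m s

section models

variable {M : Type*} {N : Type*} [LinearOrder M] [LinearOrder N]

lemma mem_typeOf_succ {m n : ℕ} (x : Fin n → M) (s : TT m (n+1)) :
    s ∈ (typeOf M (m+1) x).2 ↔ ∃ a : M, typeOf M m (Fin.snoc x a) = s := by
  show s ∈ Set.Finite.toFinset _ ↔ _
  rw [Set.Finite.mem_toFinset]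
  exact Set.mem_range

lemma realize_typeOf_zero_iff {n : ℕ} (x : Fin n → M) (y : Fin n → N) :
    (toFormula 0 (typeOf M 0 x)).Realize (default : Empty → N) y ↔
      ∀ i j : Fin n, (x i ≤ x j ↔ y i ≤ y j) := by
  refine (realize_atomBlock (typeOf M 0 x) y).trans ?_
  refine forall_congr' fun i => forall_congr' fun j => ?_
  rw [show typeOf M 0 x i j = decide (x i ≤ x j) from rfl, decide_eq_true_iff]

lemma realize_typeOf_self : ∀ (m : ℕ) {n : ℕ} (x : Fin n → M),
    (toFormula m (typeOf M m x)).Realize (default : Empty → M) x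
  | 0, n, x => by
      rw [realize_typeOf_zero_iff]
      intro i j; rfl
  | m+1, n, x => by
      rw [toFormula, realize_listConj]
      intro f hf
      simp only [List.mem_cons, List.not_mem_nil, or_false] at hf
      rcases hf with rfl | rfl | rfl
      · rw [show ((typeOf M (m+1) x).1 : Fin n → Fin n → Bool) = typeOf M 0 x from rfl]
        exact realize_typeOf_self 0 x
      · rw [realize_listConj]
        intro g hg
        simp only [List.mem_map] at hg
        obtain ⟨s, hs, rfl⟩ := hg
        rw [Finset.mem_toList, mem_typeOf_succ] at hs
        obtain ⟨a, rfl⟩ := hs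
        rw [realize_ex']
        exact ⟨a, realize_typeOf_self m _⟩
      · rw [BoundedFormula.realize_all]
        intro a
        rw [realize_listDisj]
        refine ⟨toFormula m (typeOf M m (Fin.snoc x a)), ?_, realize_typeOf_self m _⟩
        simp only [List.mem_map]
        refine ⟨typeOf M m (Fin.snoc x a), ?_, rfl⟩
        rw [Finset.mem_toList, mem_typeOf_succ]
        exact ⟨a, rfl⟩

lemma eqv_of_realize_typeOf : ∀ (m : ℕ) {n : ℕ} (x : Fin n → M) (y : Fin n → N),
    (toFormula m (typeOf M m x)).Realize (default : Empty → N) y → Eqv M N m (Fin n) x y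
  | 0, n, x, y, hr => (realize_typeOf_zero_iff x y).1 hr
  | m+1, n, x, y, hr => by
      rw [toFormula, realize_listConj] at hr
      have h0 := hr (atomBlock (typeOf M (m+1) x).1) (by simp)
      have h1 := hr (listConj ((typeOf M (m+1) x).2.toList.map fun s => ex' (toFormula m s)))
        (by simp)
      have h2 := hr (.all (listDisj ((typeOf M (m+1) x).2.toList.map fun s => toFormula m s)))
        (by simp)
      rw [realize_listConj] at h1
      rw [BoundedFormula.realize_all] at h2
      refine ⟨?_, ?_, ?_⟩
      · have h0' : (toFormula 0 (typeOf M 0 x)).Realize (default : Empty → N) y := h0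
        exact (realize_typeOf_zero_iff x y).1 h0'
      · intro c
        have hmem : ex' (toFormula m (typeOf M m (Fin.snoc x c))) ∈
            (typeOf M (m+1) x).2.toList.map fun s => ex' (toFormula m s) :=
          List.mem_map_of_mem (Finset.mem_toList.2 ((mem_typeOf_succ x _).2 ⟨c, rfl⟩))
        have := h1 _ hmem
        rw [realize_ex'] at this
        obtain ⟨d, hd⟩ := this
        have he := eqv_of_realize_typeOf m (Fin.snoc x c) (Fin.snoc y d) hd
        have hee := eqv_comp he (fun o : Option (Fin n) => o.elim (Fin.last n) Fin.castSucc)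
        rw [snoc_comp_elim, snoc_comp_elim] at hee
        exact ⟨d, hee⟩
      · intro d
        have := h2 d
        rw [realize_listDisj] at this
        obtain ⟨g, hg, hgr⟩ := this
        simp only [List.mem_map] at hg
        obtain ⟨s, hs, rfl⟩ := hg
        rw [Finset.mem_toList, mem_typeOf_succ] at hs
        obtain ⟨c, rfl⟩ := hs
        have he := eqv_of_realize_typeOf m (Fin.snoc x c) (Fin.snoc y d) hgr
        have hee := eqv_comp he (fun o : Option (Fin n) => o.elim (Fin.last n) Fin.castSucc)
        rw [snoc_comp_elim, snoc_comp_elim] at hee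
        exact ⟨c, hee⟩

end models

end hintikka

section bridges

variable {M : Type*} {N : Type*} [LinearOrder M] [LinearOrder N] {k : ℕ}

lemma eqv_of_eqRk (h : EqRk k M N) :
    Eqv M N k (Fin 0) (fun i => i.elim0) (fun i => i.elim0) := by
  set φ : Fm 0 := toFormula k (typeOf M k (fun i : Fin 0 => i.elim0)) with hφ
  have hq : qr φ ≤ k := qr_toFormula k _
  have hM : M ⊨ φ := by
    have hself := realize_typeOf_self (M := M) k (fun i : Fin 0 => i.elim0)
    show BoundedFormula.Realize φ (default : Empty → M) (default : Fin 0 → M)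
    rwa [Subsingleton.elim (default : Fin 0 → M) (fun i : Fin 0 => i.elim0)]
  have hN : N ⊨ φ := (h φ hq).1 hM
  have hN' : BoundedFormula.Realize φ (default : Empty → N) (fun i : Fin 0 => i.elim0) := by
    have : BoundedFormula.Realize φ (default : Empty → N) (default : Fin 0 → N) := hN
    rwa [Subsingleton.elim (default : Fin 0 → N) (fun i : Fin 0 => i.elim0)] at this
  exact eqv_of_realize_typeOf k _ _ hN'

lemma eqRk_of_eqv (h : Eqv M N k (Fin 0) (fun i => i.elim0) (fun i => i.elim0)) :
    EqRk k M N := by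
  intro φ hφ
  have hiff := realize_of_eqv (M := M) (N := N) φ k hφ
    (fun i : Fin 0 => i.elim0) (fun i : Fin 0 => i.elim0) h
  have e1 : (M ⊨ φ) ↔ BoundedFormula.Realize φ (default : Empty → M) (fun i : Fin 0 => i.elim0) := by
    show BoundedFormula.Realize φ (default : Empty → M) (default : Fin 0 → M) ↔ _
    rw [Subsingleton.elim (default : Fin 0 → M) (fun i : Fin 0 => i.elim0)]
  have e2 : (N ⊨ φ) ↔ BoundedFormula.Realize φ (default : Empty → N) (fun i : Fin 0 => i.elim0) := by
    show BoundedFormula.Realize φ (default : Empty → N) (default : Fin 0 → N) ↔ _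
    rw [Subsingleton.elim (default : Fin 0 → N) (fun i : Fin 0 => i.elim0)]
  rw [e1, e2]
  exact hiff

end bridges

section sigma

variable {I : Type*} [LinearOrder I] {L L' : I → Type*}
  [∀ i, LinearOrder (L i)] [∀ i, LinearOrder (L' i)]

lemma mk_le_mk {J : Type*} [LinearOrder J] {K : J → Type*} [∀ j, LinearOrder (K j)]
    {i : J} {a b : K i} : (toLex ⟨i, a⟩ : Σₗ j, K j) ≤ toLex ⟨i, b⟩ ↔ a ≤ b := by
  constructor
  · intro hc
    rcases Sigma.Lex.le_def.1 hc with h | ⟨h, h2⟩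
    · exact absurd h (lt_irrefl i)
    · exact h2
  · exact fun hab => Sigma.Lex.right a b hab

lemma mk_le_mk_left {J : Type*} [LinearOrder J] {K : J → Type*} [∀ j, LinearOrder (K j)]
    {i j : J} (hij : i < j) (a : K i) (b : K j) :
    (toLex ⟨i, a⟩ : Σₗ j, K j) ≤ toLex ⟨j, b⟩ :=
  Sigma.Lex.left a b hij

lemma not_mk_le_mk {J : Type*} [LinearOrder J] {K : J → Type*} [∀ j, LinearOrder (K j)]
    {i j : J} (hij : j < i) (a : K i) (b : K j) :
    ¬ ((toLex ⟨i, a⟩ : Σₗ j, K j) ≤ toLex ⟨j, b⟩) := by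
  intro hc
  rcases Sigma.Lex.le_def.1 hc with h | ⟨h, -⟩
  · exact lt_asymm hij h
  · exact absurd h (ne_of_gt hij)

lemma sigma_atomic {α : Type} (m : ℕ) (f : α → I) (x : α → Σₗ i, L i) (y : α → Σₗ i, L' i)
    (hc : ∀ i : I, ∃ (u : {a : α // f a = i} → L i) (v : {a : α // f a = i} → L' i),
      (∀ p : {a : α // f a = i}, x p.1 = toLex ⟨i, u p⟩) ∧
      (∀ p : {a : α // f a = i}, y p.1 = toLex ⟨i, v p⟩) ∧
      Eqv (L i) (L' i) m {a : α // f a = i} u v) :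
    ∀ a b : α, x a ≤ x b ↔ y a ≤ y b := by
  intro a b
  rcases lt_trichotomy (f a) (f b) with hab | hab | hab
  · obtain ⟨ua, va, hua, hva, -⟩ := hc (f a)
    obtain ⟨ub, vb, hub, hvb, -⟩ := hc (f b)
    rw [hua ⟨a, rfl⟩, hub ⟨b, rfl⟩, hva ⟨a, rfl⟩, hvb ⟨b, rfl⟩]
    exact iff_of_true (mk_le_mk_left hab _ _) (mk_le_mk_left hab _ _)
  · obtain ⟨u, v, hu, hv, he⟩ := hc (f b)
    rw [hu ⟨a, hab⟩, hu ⟨b, rfl⟩, hv ⟨a, hab⟩, hv ⟨b, rfl⟩, mk_le_mk, mk_le_mk]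
    exact eqv_atomic he ⟨a, hab⟩ ⟨b, rfl⟩
  · obtain ⟨ua, va, hua, hva, -⟩ := hc (f a)
    obtain ⟨ub, vb, hub, hvb, -⟩ := hc (f b)
    rw [hua ⟨a, rfl⟩, hub ⟨b, rfl⟩, hva ⟨a, rfl⟩, hvb ⟨b, rfl⟩]
    exact iff_of_false (not_mk_le_mk hab _ _) (not_mk_le_mk hab _ _)

theorem eqv_sigma : ∀ (m : ℕ) {α : Type} (f : α → I) (x : α → Σₗ i, L i) (y : α → Σₗ i, L' i),
    (∀ i : I, ∃ (u : {a : α // f a = i} → L i) (v : {a : α // f a = i} → L' i),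
      (∀ p : {a : α // f a = i}, x p.1 = toLex ⟨i, u p⟩) ∧
      (∀ p : {a : α // f a = i}, y p.1 = toLex ⟨i, v p⟩) ∧
      Eqv (L i) (L' i) m {a : α // f a = i} u v) →
    Eqv (Σₗ i, L i) (Σₗ i, L' i) m α x y := by
  intro m
  induction m with
  | zero =>
      intro α f x y hc
      exact sigma_atomic 0 f x y hc
  | succ m ih =>
      intro α f x y hc
      refine ⟨sigma_atomic (m+1) f x y hc, ?_, ?_⟩
      · -- forth
        intro c
        obtain ⟨i, ci, rfl⟩ : ∃ i ci, c = toLex ⟨i, ci⟩ := ⟨(ofLex c).1, (ofLex c).2, rfl⟩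
        obtain ⟨u, v, hu, hv, he⟩ := hc i
        obtain ⟨d, hd⟩ := he.2.1 ci
        refine ⟨toLex ⟨i, d⟩, ih (fun o => o.elim i f) _ _ ?_⟩
        intro j
        by_cases hj : j = i
        · subst hj
          let g : {o : Option α // Option.elim o j f = j} → Option {a : α // f a = j} :=
            fun p => match p with
              | ⟨none, _⟩ => none
              | ⟨some a, ha⟩ => some ⟨a, ha⟩
          refine ⟨(ext u ci) ∘ g, (ext v d) ∘ g, ?_, ?_, eqv_comp hd g⟩
          · rintro ⟨o, ho⟩
            cases o with
            | none => rfl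
            | some a => exact hu ⟨a, ho⟩
          · rintro ⟨o, ho⟩
            cases o with
            | none => rfl
            | some a => exact hv ⟨a, ho⟩
        · obtain ⟨u', v', hu', hv', he'⟩ := hc j
          let g : {o : Option α // Option.elim o i f = j} → {a : α // f a = j} :=
            fun p => match p with
              | ⟨none, h⟩ => False.elim (hj (h.symm))
              | ⟨some a, h⟩ => ⟨a, h⟩
          refine ⟨u' ∘ g, v' ∘ g, ?_, ?_, eqv_comp (eqv_mono he') g⟩
          · rintro ⟨o, ho⟩
            cases o with
            | none => exact absurd ho.symm hj
            | some a => exact hu' ⟨a, ho⟩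
          · rintro ⟨o, ho⟩
            cases o with
            | none => exact absurd ho.symm hj
            | some a => exact hv' ⟨a, ho⟩
      · -- back
        intro d
        obtain ⟨i, di, rfl⟩ : ∃ i di, d = toLex ⟨i, di⟩ := ⟨(ofLex d).1, (ofLex d).2, rfl⟩
        obtain ⟨u, v, hu, hv, he⟩ := hc i
        obtain ⟨c, hcq⟩ := he.2.2 di
        refine ⟨toLex ⟨i, c⟩, ih (fun o => o.elim i f) _ _ ?_⟩
        intro j
        by_cases hj : j = i
        · subst hj
          let g : {o : Option α // Option.elim o j f = j} → Option {a : α // f a = j} :=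
            fun p => match p with
              | ⟨none, _⟩ => none
              | ⟨some a, ha⟩ => some ⟨a, ha⟩
          refine ⟨(ext u c) ∘ g, (ext v di) ∘ g, ?_, ?_, eqv_comp hcq g⟩
          · rintro ⟨o, ho⟩
            cases o with
            | none => rfl
            | some a => exact hu ⟨a, ho⟩
          · rintro ⟨o, ho⟩
            cases o with
            | none => rfl
            | some a => exact hv ⟨a, ho⟩
        · obtain ⟨u', v', hu', hv', he'⟩ := hc j
          let g : {o : Option α // Option.elim o i f = j} → {a : α // f a = j} :=
            fun p => match p with
              | ⟨none, h⟩ => False.elim (hj (h.symm))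
              | ⟨some a, h⟩ => ⟨a, h⟩
          refine ⟨u' ∘ g, v' ∘ g, ?_, ?_, eqv_comp (eqv_mono he') g⟩
          · rintro ⟨o, ho⟩
            cases o with
            | none => exact absurd ho.symm hj
            | some a => exact hu' ⟨a, ho⟩
          · rintro ⟨o, ho⟩
            cases o with
            | none => exact absurd ho.symm hj
            | some a => exact hv' ⟨a, ho⟩

end sigma

end EFAux

/-- If `I` is a linear order and for each `i ∈ I` the linear orders
`L i` and `L' i` satisfy `L i ≡ₖ L' i`, then the ordered sums satisfy
`∑_{i∈I} L i ≡ₖ ∑_{i∈I} L' i`. -/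
theorem eqRk_sigma_lex {k : ℕ} {I : Type*} [LinearOrder I]
    (L L' : I → Type*) [∀ i, LinearOrder (L i)] [∀ i, LinearOrder (L' i)]
    (h : ∀ i, EqRk k (L i) (L' i)) :
    EqRk k (Σₗ i, L i) (Σₗ i, L' i) := by
  apply EFAux.eqRk_of_eqv
  apply EFAux.eqv_sigma k (fun a : Fin 0 => a.elim0)
  intro i
  refine ⟨fun p => p.1.elim0, fun p => p.1.elim0, fun p => p.1.elim0, fun p => p.1.elim0, ?_⟩
  have h0 := EFAux.eqv_of_eqRk (h i)
  have h1 := EFAux.eqv_comp h0 (fun p : {a : Fin 0 // (fun a : Fin 0 => a.elim0) a = i} => p.1)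
  exact h1
end

section
/- If I and I' are linear orders with I ≡_k I', then for any linear order L, the lexicographic products L·I and L·I' satisfy L·I ≡_k L·I' (where L·I = ∑_{i∈I} L). -/
open FirstOrder Language Ordinal

attribute [local instance] FirstOrder.Language.orderStructure

namespace EqRkAux

open FirstOrder Language

instance ordStr {M : Type*} [LE M] : Language.order.OrderedStructure M :=
  ⟨fun _ => Iff.rfl⟩

abbrev BF (n : ℕ) := Language.order.BoundedFormula Empty n

def bnot {n} (f : BF n) : BF n := f.imp .falsum
def band {n} (f g : BF n) : BF n := bnot (f.imp (bnot g))
def bconj {n} : List (BF n) → BF n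
  | [] => bnot .falsum
  | f :: l => band f (bconj l)
def bdisj {n} (l : List (BF n)) : BF n := bnot (bconj (l.map bnot))
def bex {n} (f : BF (n + 1)) : BF n := bnot (BoundedFormula.all (bnot f))
def atle {n} (a b : Fin n) : BF n :=
  .rel .le ![Term.var (Sum.inr a), Term.var (Sum.inr b)]

@[simp] lemma qr_bnot {n} (f : BF n) : qr (bnot f) = qr f := by
  simp [bnot, qr]
@[simp] lemma qr_band {n} (f g : BF n) : qr (band f g) = max (qr f) (qr g) := by
  simp [band, qr]
lemma qr_bconj {n} {l : List (BF n)} {k : ℕ} (h : ∀ f ∈ l, qr f ≤ k) :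
    qr (bconj l) ≤ k := by
  induction l with
  | nil => simp [bconj, qr]
  | cons f l ih =>
    simp only [bconj, qr_band, max_le_iff]
    exact ⟨h f (by simp), ih fun g hg => h g (by simp [hg])⟩
lemma qr_bdisj {n} {l : List (BF n)} {k : ℕ} (h : ∀ f ∈ l, qr f ≤ k) :
    qr (bdisj l) ≤ k := by
  rw [bdisj, qr_bnot]
  exact qr_bconj (by simpa using h)
@[simp] lemma qr_bex {n} (f : BF (n + 1)) : qr (bex f) = qr f + 1 := by
  simp [bex, qr]
@[simp] lemma qr_atle {n} (a b : Fin n) : qr (atle a b) = 0 := rfl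

variable {M : Type*} [LinearOrder M] {n : ℕ} {vE : Empty → M} {xs : Fin n → M}

@[simp] lemma realize_falsum :
    (BoundedFormula.falsum : BF n).Realize vE xs ↔ False := Iff.rfl

@[simp] lemma realize_bnot {f : BF n} :
    (bnot f).Realize vE xs ↔ ¬ f.Realize vE xs := by
  simp [bnot]
@[simp] lemma realize_band {f g : BF n} :
    (band f g).Realize vE xs ↔ f.Realize vE xs ∧ g.Realize vE xs := by
  simp only [band, realize_bnot, BoundedFormula.realize_imp]; tauto
@[simp] lemma realize_bconj {l : List (BF n)} :
    (bconj l).Realize vE xs ↔ ∀ f ∈ l, f.Realize vE xs := by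
  induction l with
  | nil => simp [bconj]
  | cons f l ih => simp [bconj, ih]
@[simp] lemma realize_bdisj {l : List (BF n)} :
    (bdisj l).Realize vE xs ↔ ∃ f ∈ l, f.Realize vE xs := by
  induction l with
  | nil => simp [bdisj, bconj]
  | cons f l ih =>
    simp only [bdisj, List.map_cons, bconj, realize_band, realize_bnot,
      List.mem_cons] at ih ⊢
    by_cases hf : f.Realize vE xs
    · simp [hf]
    · simp only [hf, not_false_iff, true_and, ih]
      constructor
      · rintro ⟨g, hg, h⟩; exact ⟨g, Or.inr hg, h⟩
      · rintro ⟨g, hg | hg, h⟩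
        · exact absurd (hg ▸ h) hf
        · exact ⟨g, hg, h⟩
@[simp] lemma realize_bex {f : BF (n + 1)} :
    (bex f).Realize vE xs ↔ ∃ m : M, f.Realize vE (Fin.snoc xs m) := by
  simp only [bex, realize_bnot, BoundedFormula.realize_all]
  push_neg
  simp
@[simp] lemma realize_atle {a b : Fin n} :
    (atle a b).Realize vE xs ↔ xs a ≤ xs b := by
  have h : (atle a b).Realize vE xs ↔
      (Term.realize (Sum.elim vE xs) (Term.var (Sum.inr a) :
          Language.order.Term (Empty ⊕ Fin n)) ≤
       Term.realize (Sum.elim vE xs) (Term.var (Sum.inr b))) := Iff.rfl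
  rw [h]
  simp [Term.realize]

lemma term_eq {n} (t : Language.order.Term (Empty ⊕ Fin n)) :
    ∃ a : Fin n, t = Term.var (Sum.inr a) := by
  cases t with
  | var v =>
    cases v with
    | inl e => exact e.elim
    | inr a => exact ⟨a, rfl⟩
  | func f ts => exact f.elim

end EqRkAux
-- continuation (appended to a.lean content for testing)
namespace EqRkAux
open FirstOrder Language

/-- Abstract rank-`k` types in `n` variables. -/
def S : ℕ → ℕ → Type
  | 0, n => Fin n → Fin n → Bool
  | k + 1, n => S k n × Set (S k (n + 1))

lemma S_finite : ∀ k n, Finite (S k n)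
  | 0, n => inferInstanceAs (Finite (Fin n → Fin n → Bool))
  | k + 1, n => by
    have := S_finite k n
    have := S_finite k (n + 1)
    exact inferInstanceAs (Finite (S k n × Set (S k (n + 1))))

instance {k n : ℕ} : Finite (S k n) := S_finite k n

/-- The rank-`k` type of a tuple in a linear order. -/
def typ : ∀ (k : ℕ) {n : ℕ} (M : Type*) [LinearOrder M], (Fin n → M) → S k n
  | 0, _, _, _, v => fun a b => decide (v a ≤ v b)
  | k + 1, _, M, _, v => (typ k M v, {s | ∃ m : M, typ k M (Fin.snoc v m) = s})

lemma typ_zero_of_typ_eq {k n : ℕ} {M N : Type*} [LinearOrder M] [LinearOrder N]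
    {v : Fin n → M} {w : Fin n → N} (h : typ k M v = typ k N w) :
    typ 0 M v = typ 0 N w := by
  induction k with
  | zero => exact h
  | succ k ih => exact ih (congrArg Prod.fst h)

lemma le_iff_of_typ_zero_eq {n : ℕ} {M N : Type*} [LinearOrder M] [LinearOrder N]
    {v : Fin n → M} {w : Fin n → N} (h : typ 0 M v = typ 0 N w) (a b : Fin n) :
    v a ≤ v b ↔ w a ≤ w b := by
  have := congrFun (congrFun h a) b
  simpa [typ, decide_eq_decide] using this

/-- Formulas of quantifier rank `≤ k` cannot distinguish tuples with the same
rank-`k` type. -/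
theorem realize_iff_of_typ_eq : ∀ {n : ℕ} (φ : BF n) (k : ℕ), qr φ ≤ k →
    ∀ {M N : Type*} [LinearOrder M] [LinearOrder N]
      (vE : Empty → M) (wE : Empty → N) (v : Fin n → M) (w : Fin n → N),
      typ k M v = typ k N w → (φ.Realize vE v ↔ φ.Realize wE w) := by
  intro n φ
  induction φ with
  | falsum =>
    intro k _ M N _ _ vE wE v w _
    exact Iff.rfl
  | equal t₁ t₂ =>
    intro k _ M N _ _ vE wE v w h
    obtain ⟨a, rfl⟩ := term_eq t₁
    obtain ⟨b, rfl⟩ := term_eq t₂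
    have hle := le_iff_of_typ_zero_eq (typ_zero_of_typ_eq h)
    have h1 : (BoundedFormula.equal (L := Language.order) (Term.var (Sum.inr a))
        (Term.var (Sum.inr b))).Realize vE v ↔ v a = v b := by
      rw [show (BoundedFormula.equal (L := Language.order) (Term.var (Sum.inr a)) (Term.var (Sum.inr b))) =
        Term.bdEqual (L := Language.order) (Term.var (Sum.inr a)) (Term.var (Sum.inr b)) from rfl,
        BoundedFormula.realize_bdEqual]
      simp
    have h2 : (BoundedFormula.equal (L := Language.order) (Term.var (Sum.inr a))
        (Term.var (Sum.inr b))).Realize wE w ↔ w a = w b := by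
      rw [show (BoundedFormula.equal (L := Language.order) (Term.var (Sum.inr a)) (Term.var (Sum.inr b))) =
        Term.bdEqual (L := Language.order) (Term.var (Sum.inr a)) (Term.var (Sum.inr b)) from rfl,
        BoundedFormula.realize_bdEqual]
      simp
    rw [h1, h2, le_antisymm_iff, le_antisymm_iff]
    exact and_congr (hle a b) (hle b a)
  | @rel _ l R ts =>
    intro k _ M N _ _ vE wE v w h
    cases R
    obtain ⟨a, ha⟩ := term_eq (ts 0)
    obtain ⟨b, hb⟩ := term_eq (ts 1)
    have hle := le_iff_of_typ_zero_eq (typ_zero_of_typ_eq h)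
    have h1 : (BoundedFormula.rel orderRel.le ts).Realize vE v ↔ v a ≤ v b := by
      have h0 : (BoundedFormula.rel orderRel.le ts).Realize vE v ↔
          Term.realize (Sum.elim vE v) (ts 0) ≤ Term.realize (Sum.elim vE v) (ts 1) :=
        Iff.rfl
      rw [h0, ha, hb]; simp
    have h2 : (BoundedFormula.rel orderRel.le ts).Realize wE w ↔ w a ≤ w b := by
      have h0 : (BoundedFormula.rel orderRel.le ts).Realize wE w ↔
          Term.realize (Sum.elim wE w) (ts 0) ≤ Term.realize (Sum.elim wE w) (ts 1) :=
        Iff.rfl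
      rw [h0, ha, hb]; simp
    rw [h1, h2]
    exact hle a b
  | imp f g ihf ihg =>
    intro k hk M N _ _ vE wE v w h
    have hf : qr f ≤ k := le_trans (le_max_left _ _) (by simpa [qr] using hk)
    have hg : qr g ≤ k := le_trans (le_max_right _ _) (by simpa [qr] using hk)
    rw [BoundedFormula.realize_imp, BoundedFormula.realize_imp]
    exact imp_congr (ihf k hf vE wE v w h) (ihg k hg vE wE v w h)
  | all f ih =>
    intro k hk M N _ _ vE wE v w h
    cases k with
    | zero => simp [qr] at hk
    | succ k =>
      have hf : qr f ≤ k := by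
        have h1 : qr f + 1 ≤ k + 1 := hk
        omega
      have hset : {s | ∃ m : M, typ k M (Fin.snoc v m) = s} =
          {s | ∃ m : N, typ k N (Fin.snoc w m) = s} := congrArg Prod.snd h
      rw [BoundedFormula.realize_all, BoundedFormula.realize_all]
      constructor
      · intro H b
        have hb : typ k N (Fin.snoc w b) ∈ {s | ∃ m : N, typ k N (Fin.snoc w m) = s} :=
          ⟨b, rfl⟩
        rw [← hset] at hb
        obtain ⟨a, hab⟩ := hb
        exact (ih k hf vE wE _ _ hab).mp (H a)
      · intro H a
        have hb : typ k M (Fin.snoc v a) ∈ {s | ∃ m : M, typ k M (Fin.snoc v m) = s} :=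
          ⟨a, rfl⟩
        rw [hset] at hb
        obtain ⟨b, hab⟩ := hb
        exact (ih k hf vE wE _ _ hab.symm).mpr (H b)

end EqRkAux
namespace EqRkAux
open FirstOrder Language

/-- The Hintikka formula of an abstract type. -/
noncomputable def hin : ∀ (k n : ℕ), S k n → BF n
  | 0, n, t => bconj (((List.finRange n).product (List.finRange n)).map
      (fun p => if t p.1 p.2 then atle p.1 p.2 else bnot (atle p.1 p.2)))
  | k + 1, n, t =>
    band (hin k n t.1)
      (band (bconj ((Set.toFinite t.2).toFinset.toList.map
          (fun s => bex (hin k (n + 1) s))))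
        (BoundedFormula.all (bdisj ((Set.toFinite t.2).toFinset.toList.map
          (fun s => hin k (n + 1) s)))))

lemma qr_hin : ∀ (k n : ℕ) (t : S k n), qr (hin k n t) ≤ k
  | 0, n, t => by
    rw [hin]
    apply qr_bconj
    intro f hf
    simp only [List.mem_map] at hf
    obtain ⟨p, _, rfl⟩ := hf
    by_cases h : t p.1 p.2 <;> simp [h]
  | k + 1, n, t => by
    rw [hin]
    simp only [qr_band, max_le_iff]
    refine ⟨le_trans (qr_hin k n t.1) (by omega), ?_, ?_⟩
    · apply le_trans (qr_bconj (k := k + 1) ?_) le_rfl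
      intro f hf
      simp only [List.mem_map] at hf
      obtain ⟨s, _, rfl⟩ := hf
      rw [qr_bex]
      exact Nat.add_le_add_right (qr_hin k (n + 1) s) 1
    · show qr (BoundedFormula.all _) ≤ k + 1
      have h1 : qr (BoundedFormula.all (bdisj ((Set.toFinite t.2).toFinset.toList.map
          (fun s => hin k (n + 1) s)))) = qr (bdisj ((Set.toFinite t.2).toFinset.toList.map
          (fun s => hin k (n + 1) s))) + 1 := rfl
      rw [h1]
      have h2 : qr (bdisj ((Set.toFinite t.2).toFinset.toList.map
          (fun s => hin k (n + 1) s))) ≤ k := by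
        apply qr_bdisj
        intro f hf
        simp only [List.mem_map] at hf
        obtain ⟨s, _, rfl⟩ := hf
        exact qr_hin k (n + 1) s
      omega

lemma realize_hin : ∀ (k n : ℕ) (t : S k n) (M : Type*) [LinearOrder M]
    (vE : Empty → M) (v : Fin n → M),
    ((hin k n t).Realize vE v ↔ typ k M v = t)
  | 0, n, t, M, _, vE, v => by
    rw [hin, realize_bconj]
    constructor
    · intro H
      funext a b
      have := H _ (List.mem_map.mpr ⟨(a, b), by simp [List.mem_product], rfl⟩)
      by_cases h : t a b
      · simp only [h, if_true, realize_atle] at this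
        simp [typ, this, h]
      · rw [if_neg h, realize_bnot, realize_atle] at this
        have h' : t a b = false := by simpa using h
        simp [typ, this, h']
    · intro H f hf
      simp only [List.mem_map] at hf
      obtain ⟨⟨a, b⟩, _, rfl⟩ := hf
      have : typ 0 M v a b = t a b := congrFun (congrFun H a) b
      simp only [typ] at this
      by_cases h : v a ≤ v b
      · have : t a b = true := by rw [← this]; simp [h]
        simp [this, h]
      · have : t a b = false := by rw [← this]; simp [h]
        simp [this, h]
  | k + 1, n, t, M, _, vE, v => by
    rw [hin, realize_band, realize_band, realize_bconj, BoundedFormula.realize_all]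
    have e1 : (hin k n t.1).Realize vE v ↔ typ k M v = t.1 := realize_hin k n t.1 M vE v
    have e2 : (∀ f ∈ (Set.toFinite t.2).toFinset.toList.map
        (fun s => bex (hin k (n + 1) s)), f.Realize vE v) ↔
        ∀ s ∈ t.2, ∃ m : M, typ k M (Fin.snoc v m) = s := by
      constructor
      · intro H s hs
        have := H _ (List.mem_map.mpr ⟨s, by simp [hs], rfl⟩)
        rw [realize_bex] at this
        obtain ⟨m, hm⟩ := this
        exact ⟨m, (realize_hin k (n + 1) s M vE _).mp hm⟩
      · intro H f hf
        simp only [List.mem_map, Finset.mem_toList, Set.Finite.mem_toFinset] at hf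
        obtain ⟨s, hs, rfl⟩ := hf
        obtain ⟨m, hm⟩ := H s hs
        rw [realize_bex]
        exact ⟨m, (realize_hin k (n + 1) s M vE _).mpr hm⟩
    have e3 : (∀ m : M, (bdisj ((Set.toFinite t.2).toFinset.toList.map
        (fun s => hin k (n + 1) s))).Realize vE (Fin.snoc v m)) ↔
        ∀ m : M, typ k M (Fin.snoc v m) ∈ t.2 := by
      apply forall_congr'
      intro m
      rw [realize_bdisj]
      constructor
      · rintro ⟨f, hf, hr⟩
        simp only [List.mem_map, Finset.mem_toList, Set.Finite.mem_toFinset] at hf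
        obtain ⟨s, hs, rfl⟩ := hf
        have hty := (realize_hin k (n + 1) s M vE _).mp hr
        rwa [← hty] at hs
      · intro hm
        refine ⟨hin k (n + 1) (typ k M (Fin.snoc v m)),
          List.mem_map.mpr ⟨_, by simp [hm], rfl⟩,
          (realize_hin k (n + 1) _ M vE _).mpr rfl⟩
    rw [e1, e2, e3]
    constructor
    · rintro ⟨h1, h2, h3⟩
      have : typ (k + 1) M v = (typ k M v, {s | ∃ m : M, typ k M (Fin.snoc v m) = s}) :=
        rfl
      rw [this]; show @Eq (S k n × Set (S k (n + 1))) _ t; refine Prod.ext_iff.mpr ?_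
      refine ⟨h1, ?_⟩
      ext s
      exact ⟨fun ⟨m, hm⟩ => hm ▸ h3 m, fun hs => h2 s hs⟩
    · intro H
      have h1 : typ k M v = t.1 := congrArg Prod.fst H
      have h2 : {s | ∃ m : M, typ k M (Fin.snoc v m) = s} = t.2 := congrArg Prod.snd H
      refine ⟨h1, fun s hs => ?_, fun m => ?_⟩
      · rw [← h2] at hs; exact hs
      · rw [← h2]; exact ⟨m, rfl⟩

end EqRkAux
namespace EqRkAux
open FirstOrder Language

lemma lex_le_iff {I L : Type*} [LinearOrder I] [LinearOrder L] (p q : I ×ₗ L) :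
    p ≤ q ↔ (ofLex p).1 < (ofLex q).1 ∨
      ((ofLex p).1 = (ofLex q).1 ∧ (ofLex p).2 ≤ (ofLex q).2) :=
  Prod.Lex.le_iff

/-- Transfer of types along the lexicographic product. -/
lemma typ_prod {I I' : Type*} [LinearOrder I] [LinearOrder I']
    (L : Type*) [LinearOrder L] :
    ∀ (k : ℕ) {n : ℕ} (v : Fin n → I ×ₗ L) (v' : Fin n → I' ×ₗ L),
    typ k I (fun a => (ofLex (v a)).1) = typ k I' (fun a => (ofLex (v' a)).1) →
    (∀ a, (ofLex (v a)).2 = (ofLex (v' a)).2) →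
    typ k (I ×ₗ L) v = typ k (I' ×ₗ L) v'
  | 0, n, v, v', h1, h2 => by
    have hle := le_iff_of_typ_zero_eq h1
    funext a b
    show decide (v a ≤ v b) = decide (v' a ≤ v' b)
    rw [decide_eq_decide, lex_le_iff, lex_le_iff]
    have heq : (ofLex (v a)).1 = (ofLex (v b)).1 ↔ (ofLex (v' a)).1 = (ofLex (v' b)).1 := by
      rw [le_antisymm_iff, le_antisymm_iff]
      exact and_congr (hle a b) (hle b a)
    have hlt : (ofLex (v a)).1 < (ofLex (v b)).1 ↔ (ofLex (v' a)).1 < (ofLex (v' b)).1 := by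
      rw [lt_iff_le_not_ge, lt_iff_le_not_ge]
      exact and_congr (hle a b) (not_congr (hle b a))
    rw [h2 a, h2 b]
    exact or_congr hlt (and_congr heq Iff.rfl)
  | k + 1, n, v, v', h1, h2 => by
    have hfst : typ k I (fun a => (ofLex (v a)).1) = typ k I' (fun a => (ofLex (v' a)).1) :=
      congrArg Prod.fst h1
    have hsnd : {s | ∃ i : I, typ k I (Fin.snoc (fun a => (ofLex (v a)).1) i) = s} =
        {s | ∃ i : I', typ k I' (Fin.snoc (fun a => (ofLex (v' a)).1) i) = s} :=
      congrArg Prod.snd h1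
    show (typ k (I ×ₗ L) v, _) = (typ k (I' ×ₗ L) v', _)
    have e0 : typ k (I ×ₗ L) v = typ k (I' ×ₗ L) v' := typ_prod L k v v' hfst h2
    refine Prod.ext e0 ?_
    show {s | ∃ m : I ×ₗ L, typ k (I ×ₗ L) (Fin.snoc v m) = s} =
        {s | ∃ m : I' ×ₗ L, typ k (I' ×ₗ L) (Fin.snoc v' m) = s}
    ext s
    constructor
    · rintro ⟨m, rfl⟩
      have hm : typ k I (Fin.snoc (fun a => (ofLex (v a)).1) (ofLex m).1) ∈
          {s | ∃ i : I, typ k I (Fin.snoc (fun a => (ofLex (v a)).1) i) = s} :=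
        ⟨(ofLex m).1, rfl⟩
      rw [hsnd] at hm
      obtain ⟨i', hi'⟩ := hm
      refine ⟨toLex (i', (ofLex m).2), ?_⟩
      refine (typ_prod L k (Fin.snoc v m)
        (Fin.snoc v' (toLex (i', (ofLex m).2))) ?_ ?_).symm
      · have ev : (fun a : Fin (n+1) => (ofLex ((Fin.snoc v m : Fin (n + 1) → I ×ₗ L) a)).1) =
            Fin.snoc (fun a => (ofLex (v a)).1) (ofLex m).1 := by
          funext a
          refine Fin.lastCases ?_ (fun j => ?_) a <;> simp
        have ev' : (fun a : Fin (n+1) => (ofLex ((Fin.snoc v' (toLex (i', (ofLex m).2)) : Fin (n + 1) → I' ×ₗ L) a)).1) =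
            Fin.snoc (fun a => (ofLex (v' a)).1) i' := by
          funext a
          refine Fin.lastCases ?_ (fun j => ?_) a <;> simp
        rw [ev, ev', hi']
      · intro a
        refine Fin.lastCases ?_ (fun j => ?_) a <;> simp [h2 _]
    · rintro ⟨m, rfl⟩
      have hm : typ k I' (Fin.snoc (fun a => (ofLex (v' a)).1) (ofLex m).1) ∈
          {s | ∃ i : I', typ k I' (Fin.snoc (fun a => (ofLex (v' a)).1) i) = s} :=
        ⟨(ofLex m).1, rfl⟩
      rw [← hsnd] at hm
      obtain ⟨i, hi⟩ := hm
      refine ⟨toLex (i, (ofLex m).2), ?_⟩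
      refine typ_prod L k (Fin.snoc v (toLex (i, (ofLex m).2)))
        (Fin.snoc v' m) ?_ ?_
      · have ev : (fun a : Fin (n+1) => (ofLex ((Fin.snoc v (toLex (i, (ofLex m).2)) : Fin (n + 1) → I ×ₗ L) a)).1) =
            Fin.snoc (fun a => (ofLex (v a)).1) i := by
          funext a
          refine Fin.lastCases ?_ (fun j => ?_) a <;> simp
        have ev' : (fun a : Fin (n+1) => (ofLex ((Fin.snoc v' m : Fin (n + 1) → I' ×ₗ L) a)).1) =
            Fin.snoc (fun a => (ofLex (v' a)).1) (ofLex m).1 := by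
          funext a
          refine Fin.lastCases ?_ (fun j => ?_) a <;> simp
        rw [ev, ev', hi]
      · intro a
        refine Fin.lastCases ?_ (fun j => ?_) a <;> simp [h2 _]

end EqRkAux
open EqRkAux in
/-- If `I ≡ₖ I'`, then for any linear order `L`, the lexicographic
products `L·I = ∑_{i∈I} L` and `L·I'` satisfy `L·I ≡ₖ L·I'`. -/
theorem eqRk_prod_lex {k : ℕ} {I I' : Type*} [LinearOrder I] [LinearOrder I']
    (L : Type*) [LinearOrder L] (h : EqRk k I I') :
    EqRk k (I ×ₗ L) (I' ×ₗ L) := by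
  intro φ hφ
  have htypI : typ k I' (default : Fin 0 → I') = typ k I (default : Fin 0 → I) := by
    have h1 : I ⊨ (hin k 0 (typ k I (default : Fin 0 → I))) :=
      (realize_hin k 0 (typ k I (default : Fin 0 → I)) I default default).mpr rfl
    have h2 : I' ⊨ (hin k 0 (typ k I (default : Fin 0 → I))) :=
      (h _ (qr_hin k 0 _)).mp h1
    exact (realize_hin k 0 (typ k I (default : Fin 0 → I)) I' default default).mp h2
  have hlex : typ k (I ×ₗ L) (default : Fin 0 → I ×ₗ L) =
      typ k (I' ×ₗ L) (default : Fin 0 → I' ×ₗ L) := by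
    apply typ_prod L k
    · rw [Subsingleton.elim (fun a : Fin 0 => (ofLex ((default : Fin 0 → I ×ₗ L) a)).1)
        (default : Fin 0 → I),
        Subsingleton.elim (fun a : Fin 0 => (ofLex ((default : Fin 0 → I' ×ₗ L) a)).1)
        (default : Fin 0 → I')]
      exact htypI.symm
    · intro a
      exact a.elim0
  exact realize_iff_of_typ_eq φ k hφ default default default default hlex
end

section
/- The first-order theory of ⟨ω,<⟩ is finitely axiomatized by the linear order axioms plus: a least element exists, every element has an immediate successor, and every non-minimal element has an immediate predecessor. That is, every linear order satisfying these axioms is elementarily equivalent to ⟨ω,<⟩. -/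
open FirstOrder Language Ordinal

attribute [local instance] FirstOrder.Language.orderStructure

namespace OmegaAx

variable {L : Type*} [LinearOrder L]

structure Good (S : L → L) (m : L) : Prop where
  lt : ∀ x, x < S x
  succ_le : ∀ x z, x < z → S x ≤ z
  bot : ∀ x, m ≤ x
  pred : ∀ x : L, (∃ z, z < x) → ∃ y, y < x ∧ ∀ z, z < x → z ≤ y

namespace Good
variable {S : L → L} {m : L} (h : Good S m)
include h
lemma strictMono : StrictMono S := fun x y hxy => lt_of_le_of_lt (h.succ_le x y hxy) (h.lt y)
lemma iter_strictMono (n : ℕ) : StrictMono (S^[n]) := h.strictMono.iterate n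
lemma le_iter (x : L) (n : ℕ) : x ≤ S^[n] x := by
  induction n with
  | zero => simp
  | succ k ih => rw [Function.iterate_succ_apply']; exact ih.trans (h.lt _).le
lemma lt_iter (x : L) {n : ℕ} (hn : 0 < n) : x < S^[n] x := by
  obtain ⟨k, rfl⟩ : ∃ k, n = k + 1 := ⟨n - 1, by omega⟩
  rw [Function.iterate_succ_apply']
  exact lt_of_le_of_lt (h.le_iter x k) (h.lt _)
lemma iter_le_iter (x : L) {p q : ℕ} (hpq : p ≤ q) : S^[p] x ≤ S^[q] x := by
  obtain ⟨r, rfl⟩ : ∃ r, q = r + p := ⟨q - p, by omega⟩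
  rw [Function.iterate_add_apply]
  exact h.le_iter _ r
lemma iter_lt_iter (x : L) {p q : ℕ} (hpq : p < q) : S^[p] x < S^[q] x := by
  obtain ⟨r, rfl⟩ : ∃ r, q = r + p := ⟨q - p, by omega⟩
  rw [Function.iterate_add_apply]
  exact h.lt_iter _ (by omega)
lemma exp_le {x : L} {p q : ℕ} (hle : S^[p] x ≤ S^[q] x) : p ≤ q := by
  by_contra hc
  exact absurd hle (not_le_of_gt (h.iter_lt_iter x (by omega)))
lemma iter_le_cancel {x y : L} {n : ℕ} (hle : S^[n] x ≤ S^[n] y) : x ≤ y :=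
  (h.iter_strictMono n).le_iff_le.mp hle
lemma iter_inj {x y : L} {n : ℕ} (he : S^[n] x = S^[n] y) : x = y :=
  (h.iter_strictMono n).injective he
lemma between : ∀ (d : ℕ) (x z : L), x ≤ z → z ≤ S^[d] x → ∃ e, e ≤ d ∧ z = S^[e] x := by
  intro d
  induction d with
  | zero => exact fun x z h1 h2 => ⟨0, le_rfl, le_antisymm h2 h1⟩
  | succ k ih =>
    intro x z h1 h2
    rcases le_or_gt z (S^[k] x) with h' | h'
    · obtain ⟨e, he, hz⟩ := ih x z h1 h'
      exact ⟨e, by omega, hz⟩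
    · refine ⟨k + 1, le_rfl, le_antisymm h2 ?_⟩
      rw [Function.iterate_succ_apply']
      exact h.succ_le _ _ h'
lemma predChain : ∀ (d : ℕ) (x y : L), S^[d] x ≤ y → ∃ z, x ≤ z ∧ S^[d] z = y := by
  intro d
  induction d with
  | zero => exact fun x y hxy => ⟨y, hxy, rfl⟩
  | succ k ih =>
    intro x y hxy
    have hlt : S^[k] x < y := lt_of_lt_of_le (h.iter_lt_iter x (Nat.lt_succ_self k)) hxy
    obtain ⟨p, hp1, hp2⟩ := h.pred y ⟨_, hlt⟩
    have hSp : S p = y := by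
      refine le_antisymm (h.succ_le _ _ hp1) ?_
      by_contra hc
      exact absurd (hp2 _ (lt_of_not_ge hc)) (not_le_of_gt (h.lt p))
    obtain ⟨z, hz1, hz2⟩ := ih x p (hp2 _ hlt)
    exact ⟨z, hz1, by rw [Function.iterate_succ_apply', hz2, hSp]⟩
end Good

set_option linter.unusedSectionVars false in
/-- helper : collapse double iterates -/
lemma iter_iter (S : L → L) (p q : ℕ) (x : L) : S^[p] (S^[q] x) = S^[p + q] x :=
  (Function.iterate_add_apply S p q x).symm

set_option linter.unusedSectionVars false in
lemma iter_congr (S : L → L) {p q : ℕ} (hpq : p = q) (x : L) : S^[p] x = S^[q] x := by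
  rw [hpq]

/-- The gap condition on one ordered pair. -/
def Q (S : L → L) (k d : ℕ) (x y : L) : Prop :=
  if d < 2 ^ k then y = S^[d] x else S^[2 ^ k] x ≤ y

section Qlem
variable {S : L → L} {m : L} (h : Good S m) {k d : ℕ} {x y : L}
include h

lemma Q_of_eq (hd : y = S^[d] x) : Q S k d x y := by
  rw [Q]
  split_ifs with hc
  · exact hd
  · rw [hd]; exact h.iter_le_iter x (by omega)

omit h in
lemma Q_of_far (hd : 2 ^ k ≤ d) (hf : S^[2 ^ k] x ≤ y) : Q S k d x y := by
  rw [Q, if_neg (by omega)]; exact hf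

omit h in
lemma Q_elim (hQ : Q S k d x y) : y = S^[d] x ∨ (2 ^ k ≤ d ∧ S^[2 ^ k] x ≤ y) := by
  rw [Q] at hQ
  split_ifs at hQ with hc
  · exact Or.inl hQ
  · exact Or.inr ⟨by omega, hQ⟩

lemma Q_le (hQ : Q S k d x y) : x ≤ y := by
  rcases Q_elim hQ with he | ⟨_, hf⟩
  · rw [he]; exact h.le_iter x d
  · exact le_trans (h.le_iter x _) hf

lemma Q_lt (hd : 0 < d) (hQ : Q S k d x y) : x < y := by
  rcases Q_elim hQ with he | ⟨_, hf⟩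
  · rw [he]; exact h.lt_iter x hd
  · exact lt_of_lt_of_le (h.lt_iter x (by positivity)) hf

lemma Q_mono (hQ : Q S (k + 1) d x y) : Q S k d x y := by
  have p2 : 2 ^ (k + 1) = 2 ^ k + 2 ^ k := by ring
  rcases Q_elim hQ with he | ⟨hd, hf⟩
  · exact Q_of_eq h he
  · exact Q_of_far (by omega) (le_trans (h.iter_le_iter x (Nat.pow_le_pow_right (by norm_num) (Nat.le_succ k))) hf)

end Qlem

/-- k-round extendability condition for (augmented) tuples. -/
def Ext (S : L → L) (m : L) (k : ℕ) {N : ℕ} (V : Fin N → ℕ) (W : Fin N → L) : Prop :=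
  (∃ b, V b = 0 ∧ W b = m) ∧ ∀ i j, V i ≤ V j → Q S k (V j - V i) (W i) (W j)

section FB
variable {S : L → L} {m : L} (h : Good S m) {k N : ℕ} {V : Fin N → ℕ} {W : Fin N → L}
include h

lemma forth
    (H : ∀ i j, V i ≤ V j → Q S (k + 1) (V j - V i) (W i) (W j))
    (hb : ∃ b, V b = 0 ∧ W b = m) (a : ℕ) :
    ∃ x : L, ∀ t, (V t ≤ a → Q S k (a - V t) (W t) x) ∧
      (a ≤ V t → Q S k (V t - a) x (W t)) := by
  have p1 : 0 < 2 ^ k := pow_pos (by norm_num) k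
  have p2 : 2 ^ (k + 1) = 2 ^ k + 2 ^ k := by ring
  obtain ⟨b, hb0, hbm⟩ := hb
  by_cases h1 : ∃ i, V i ≤ a ∧ a - V i < 2 ^ k
  · -- a within 2^k above some V i
    obtain ⟨i, hia, hie⟩ := h1
    refine ⟨S^[a - V i] (W i), fun t => ⟨fun hta => ?_, fun hat => ?_⟩⟩
    · rcases le_total (V t) (V i) with hti | hit
      · rcases Q_elim (H t i hti) with he | ⟨hg, hf⟩
        · refine Q_of_eq h ?_
          rw [he, iter_iter]
          exact iter_congr S (by omega) _
        · refine Q_of_far (by omega) ?_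
          calc S^[2 ^ k] (W t) ≤ S^[2 ^ (k + 1)] (W t) := h.iter_le_iter _ (by omega)
            _ ≤ W i := hf
            _ ≤ S^[a - V i] (W i) := h.le_iter _ _
      · rcases Q_elim (H i t hit) with he | ⟨hg, hf⟩
        · refine Q_of_eq h ?_
          rw [he, iter_iter]
          exact iter_congr S (by omega) _
        · omega
    · rcases Q_elim (H i t (le_trans hia hat)) with he | ⟨hg, hf⟩
      · refine Q_of_eq h ?_
        rw [he, iter_iter]
        exact (iter_congr S (by omega) _).symm
      · refine Q_of_far (by omega) ?_
        calc S^[2 ^ k] (S^[a - V i] (W i)) = S^[2 ^ k + (a - V i)] (W i) := iter_iter ..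
          _ ≤ S^[2 ^ (k + 1)] (W i) := h.iter_le_iter _ (by omega)
          _ ≤ W t := hf
  · by_cases h2 : ∃ j, a < V j ∧ V j - a < 2 ^ k
    · -- a within 2^k below some V j ; need predecessors
      obtain ⟨j, hja, hjd⟩ := h2
      set d := V j - a with hd
      have hd1 : 1 ≤ d := by omega
      -- construct x with S^[d] x = W j
      have hbj : V b ≤ V j := by omega
      obtain ⟨x, hx⟩ : ∃ x : L, S^[d] x = W j := by
        rcases Q_elim (H b j hbj) with he | ⟨hg, hf⟩
        · refine ⟨S^[V j - V b - d] (W b), ?_⟩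
          rw [he, iter_iter]
          exact iter_congr S (by omega) _
        · obtain ⟨z, _, hz2⟩ := h.predChain d (S^[2 ^ (k + 1) - d] (W b)) (W j)
            (by rw [iter_iter]; exact le_trans (h.iter_le_iter _ (by omega)) hf)
          exact ⟨z, hz2⟩
      refine ⟨x, fun t => ⟨fun hta => ?_, fun hat => ?_⟩⟩
      · -- V t ≤ a : far below (case 1 fails)
        have htf : 2 ^ k ≤ a - V t := by
          by_contra hc
          exact h1 ⟨t, hta, by omega⟩
        refine Q_of_far (by omega) ?_
        have htj : V t ≤ V j := by omega
        rcases Q_elim (H t j htj) with he | ⟨hg, hf⟩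
        · have : S^[d] x = S^[d] (S^[V j - V t - d] (W t)) := by
            rw [hx, he, iter_iter]
            exact iter_congr S (by omega) _
          have hxx := (h.iter_strictMono d).injective this
          rw [hxx]
          exact h.iter_le_iter _ (by omega)
        · have : S^[d] (S^[2 ^ (k + 1) - d] (W t)) ≤ S^[d] x := by
            rw [hx, iter_iter]
            exact le_trans (le_of_eq (iter_congr S (by omega) _)) hf
          have := h.iter_le_cancel this
          exact le_trans (h.iter_le_iter _ (by omega)) this
      · rcases le_total (V t) (V j) with htj | hjt
        · rcases Q_elim (H t j htj) with he | ⟨hg, hf⟩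
          · refine Q_of_eq h ?_
            have : S^[V j - V t] (S^[V t - a] x) = S^[V j - V t] (W t) := by
              rw [iter_iter, ← he, ← hx]
              exact iter_congr S (by omega) _
            exact ((h.iter_strictMono _).injective this).symm
          · omega
        · rcases Q_elim (H j t hjt) with he | ⟨hg, hf⟩
          · refine Q_of_eq h ?_
            rw [he, ← hx, iter_iter]
            exact (iter_congr S (by omega) _).symm
          · refine Q_of_far (by omega) ?_
            calc S^[2 ^ k] x ≤ S^[2 ^ (k + 1)] (S^[d] x) := by
                  rw [iter_iter]; exact h.iter_le_iter _ (by omega)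
              _ = S^[2 ^ (k + 1)] (W j) := by rw [hx]
              _ ≤ W t := hf
    · -- a far from everything
      push_neg at h1 h2
      have hs : ∃ i0 ∈ Finset.univ.filter (fun i => V i ≤ a), ∀ i ∈ Finset.univ.filter (fun i => V i ≤ a), V i ≤ V i0 := by
        apply Finset.exists_max_image
        exact ⟨b, by simp; omega⟩
      obtain ⟨i0, hi0mem, hi0max⟩ := hs
      have hi0a : V i0 ≤ a := by simpa using hi0mem
      refine ⟨S^[2 ^ k] (W i0), fun t => ⟨fun hta => ?_, fun hat => ?_⟩⟩
      · refine Q_of_far (h1 t hta) ?_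
        have : W t ≤ W i0 := Q_le h (H t i0 (hi0max t (by simpa using hta)))
        exact h.iter_strictMono (2 ^ k) |>.monotone this
      · rcases eq_or_lt_of_le hat with heq | hlt
        · -- a = V t : impossible since then case-1 would hold (a - V t = 0 < 2^k)
          have := h1 t (by omega)
          omega
        · refine Q_of_far (h2 t hlt) ?_
          have hgap : 2 ^ (k + 1) ≤ V t - V i0 := by
            have := h1 i0 hi0a
            have := h2 t hlt
            omega
          rcases Q_elim (H i0 t (by omega)) with he | ⟨hg, hf⟩
          · rw [he, iter_iter]
            exact h.iter_le_iter _ (by omega)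
          · rw [iter_iter]
            exact le_trans (le_of_eq (iter_congr S (by omega) _)) hf

lemma back
    (H : ∀ i j, V i ≤ V j → Q S (k + 1) (V j - V i) (W i) (W j))
    (hb : ∃ b, V b = 0 ∧ W b = m) (x : L) :
    ∃ a : ℕ, ∀ t, (V t ≤ a → Q S k (a - V t) (W t) x) ∧
      (a ≤ V t → Q S k (V t - a) x (W t)) := by
  have p1 : 0 < 2 ^ k := pow_pos (by norm_num) k
  have p2 : 2 ^ (k + 1) = 2 ^ k + 2 ^ k := by ring
  obtain ⟨b, hb0, hbm⟩ := hb
  by_cases h1 : ∃ i, ∃ e, e < 2 ^ k ∧ x = S^[e] (W i)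
  · obtain ⟨i, e, he, hx⟩ := h1
    refine ⟨V i + e, fun t => ⟨fun hta => ?_, fun hat => ?_⟩⟩
    · rcases le_total (V t) (V i) with hti | hit
      · rcases Q_elim (H t i hti) with he2 | ⟨hg, hf⟩
        · refine Q_of_eq h ?_
          rw [hx, he2, iter_iter]
          exact iter_congr S (by omega) _
        · refine Q_of_far (by omega) ?_
          rw [hx]
          exact le_trans (h.iter_le_iter _ (show 2 ^ k ≤ 2 ^ (k + 1) by omega))
            (le_trans hf (h.le_iter _ _))
      · rcases Q_elim (H i t hit) with he2 | ⟨hg, hf⟩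
        · refine Q_of_eq h ?_
          rw [hx, he2, iter_iter]
          exact iter_congr S (by omega) _
        · omega
    · have hit : V i ≤ V t := by omega
      rcases Q_elim (H i t hit) with he2 | ⟨hg, hf⟩
      · refine Q_of_eq h ?_
        rw [he2, hx, iter_iter]
        exact iter_congr S (by omega) _
      · refine Q_of_far (by omega) ?_
        rw [hx, iter_iter]
        exact le_trans (h.iter_le_iter _ (by omega)) hf
  · by_cases h2 : ∃ j, ∃ d, 1 ≤ d ∧ d < 2 ^ k ∧ S^[d] x = W j
    · obtain ⟨j, d, hd1, hdk, hx⟩ := h2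
      have hdVj : d ≤ V j := by
        rcases Q_elim (H b j (by omega)) with he | ⟨hg, hf⟩
        · by_contra hc
          have h1' : S^[V j] (S^[d - V j] x) = S^[V j] m := by
            rw [iter_iter, iter_congr S (show V j + (d - V j) = d by omega), hx, he, hbm]
            exact iter_congr S (by omega) _
          have h2' := (h.iter_strictMono _).injective h1'
          have h3' := h.lt_iter x (show 0 < d - V j by omega)
          rw [h2'] at h3'
          exact absurd h3' (not_lt_of_ge (h.bot x))
        · omega
      refine ⟨V j - d, fun t => ⟨fun hta => ?_, fun hat => ?_⟩⟩
      · have htj : V t ≤ V j := by omega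
        rcases Q_elim (H t j htj) with he | ⟨hg, hf⟩
        · refine Q_of_eq h ?_
          refine (h.iter_strictMono d).injective ?_
          rw [hx, he, iter_iter]
          exact iter_congr S (by omega) _
        · refine Q_of_far (by omega) ?_
          have hle : S^[d] (S^[2 ^ (k + 1) - d] (W t)) ≤ S^[d] x := by
            rw [hx, iter_iter]
            exact le_trans (le_of_eq (iter_congr S (by omega) _)) hf
          exact le_trans (h.iter_le_iter _ (by omega)) (h.iter_le_cancel hle)
      · rcases le_total (V t) (V j) with htj | hjt
        · rcases Q_elim (H t j htj) with he | ⟨hg, hf⟩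
          · refine Q_of_eq h ?_
            refine ((h.iter_strictMono (V j - V t)).injective ?_).symm
            rw [iter_iter, iter_congr S (show V j - V t + (V t - (V j - d)) = d by omega), hx, he]
          · omega
        · rcases Q_elim (H j t hjt) with he | ⟨hg, hf⟩
          · refine Q_of_eq h ?_
            rw [he, ← hx, iter_iter]
            exact iter_congr S (by omega) _
          · refine Q_of_far (by omega) ?_
            calc S^[2 ^ k] x ≤ S^[2 ^ (k + 1)] (S^[d] x) := by
                  rw [iter_iter]; exact h.iter_le_iter _ (by omega)
              _ = S^[2 ^ (k + 1)] (W j) := by rw [hx]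
              _ ≤ W t := hf
    · push_neg at h1 h2
      have fact1 : ∀ t, W t ≤ x → S^[2 ^ k] (W t) ≤ x := by
        intro t ht
        by_contra hc
        obtain ⟨e, hed, hxe⟩ := h.between (2 ^ k) (W t) x ht (le_of_lt (lt_of_not_ge hc))
        have hene : e ≠ 2 ^ k := fun heq => hc (le_of_eq (by rw [hxe, heq]))
        exact h1 t e (by omega) hxe
      have fact2 : ∀ t, x < W t → S^[2 ^ k] x ≤ W t := by
        intro t ht
        by_contra hc
        obtain ⟨e, hed, hxe⟩ := h.between (2 ^ k) x (W t) ht.le (le_of_lt (lt_of_not_ge hc))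
        have he1 : 1 ≤ e := by
          rcases Nat.eq_zero_or_pos e with rfl | hp
          · rw [Function.iterate_zero_apply] at hxe
            exact absurd hxe.symm (ne_of_lt ht)
          · exact hp
        have hene : e ≠ 2 ^ k := fun heq => hc (le_of_eq (by rw [hxe, heq]))
        exact h2 t e he1 (by omega) hxe.symm
      have hs : ∃ i0 ∈ Finset.univ.filter (fun i => W i ≤ x), ∀ i ∈ Finset.univ.filter (fun i => W i ≤ x), V i ≤ V i0 := by
        apply Finset.exists_max_image
        exact ⟨b, by simp [hbm, h.bot x]⟩
      obtain ⟨i0, hi0mem, hi0max⟩ := hs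
      have hx0 : W i0 ≤ x := by simpa using hi0mem
      have clow : ∀ t, W t ≤ x → V t ≤ V i0 := fun t ht => hi0max t (by simpa using ht)
      have chigh : ∀ t, x < W t → 2 ^ (k + 1) ≤ V t - V i0 := by
        intro t ht
        have hWlt : W i0 < W t := lt_of_le_of_lt hx0 ht
        have hVle : V i0 ≤ V t := by
          by_contra hc
          exact absurd (Q_le h (H t i0 (by omega))) (not_le_of_gt hWlt)
        rcases Q_elim (H i0 t hVle) with he | ⟨hg, hf⟩
        · obtain ⟨e, hed, hxe⟩ := h.between (V t - V i0) (W i0) x hx0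
            (le_of_lt (he ▸ ht))
          have hene : e ≠ V t - V i0 := by
            intro hq
            rw [hq, ← he] at hxe
            exact absurd hxe (ne_of_lt ht)
          have hge : 2 ^ k ≤ e := by
            by_contra hc
            exact h1 i0 e (by omega) hxe
          have hstep : S^[V t - V i0 - e] x = W t := by
            rw [hxe, iter_iter, he]
            exact iter_congr S (by omega) _
          have hge2 : 2 ^ k ≤ V t - V i0 - e := by
            by_contra hc
            exact h2 t (V t - V i0 - e) (by omega) (by omega) hstep
          omega
        · exact hg
      refine ⟨V i0 + 2 ^ k, fun t => ⟨fun hta => ?_, fun hat => ?_⟩⟩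
      · rcases le_or_gt (W t) x with ht | ht
        · exact Q_of_far (by have := clow t ht; omega) (fact1 t ht)
        · have := chigh t ht
          omega
      · rcases le_or_gt (W t) x with ht | ht
        · have := clow t ht
          omega
        · exact Q_of_far (by have := chigh t ht; omega) (fact2 t ht)

end FB

section Glue
variable {S : L → L} {m : L} (h : Good S m)
include h

lemma ext_le_iff {k N : ℕ} {V : Fin N → ℕ} {W : Fin N → L} (hE : Ext S m k V W) (i j : Fin N) :
    W i ≤ W j ↔ V i ≤ V j := by
  constructor
  · intro hw
    by_contra hc
    exact absurd hw (not_le_of_gt (Q_lt h (show 0 < V i - V j by omega) (hE.2 j i (by omega))))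
  · intro hv
    exact Q_le h (hE.2 i j hv)

lemma ext_snoc {k N : ℕ} {V : Fin N → ℕ} {W : Fin N → L} (hE : Ext S m (k + 1) V W)
    {a : ℕ} {x : L}
    (hax : ∀ t, (V t ≤ a → Q S k (a - V t) (W t) x) ∧ (a ≤ V t → Q S k (V t - a) x (W t))) :
    Ext S m k (Fin.snoc V a) (Fin.snoc W x) := by
  obtain ⟨⟨b, hb0, hbm⟩, H⟩ := hE
  constructor
  · exact ⟨b.castSucc, by simp [hb0, hbm]⟩
  · intro i j
    refine Fin.lastCases ?_ (fun i' => ?_) i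
    · refine Fin.lastCases ?_ (fun j' => ?_) j
      · intro _
        simp only [Fin.snoc_last]
        rw [Nat.sub_self]
        exact Q_of_eq h (by rw [Function.iterate_zero_apply])
      · intro hij
        simp only [Fin.snoc_last, Fin.snoc_castSucc] at hij ⊢
        exact (hax j').2 hij
    · refine Fin.lastCases ?_ (fun j' => ?_) j
      · intro hij
        simp only [Fin.snoc_last, Fin.snoc_castSucc] at hij ⊢
        exact (hax i').1 hij
      · intro hij
        simp only [Fin.snoc_castSucc] at hij ⊢
        exact Q_mono h (H i' j' hij)

end Glue

lemma snoc_comp_succ {β : Type*} {N : ℕ} (V : Fin (N + 1) → β) (a : β) :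
    (fun i : Fin (N + 1) => Fin.snoc (α := fun _ => β) V a i.succ) =
      Fin.snoc (α := fun _ => β) (fun i : Fin N => V i.succ) a := by
  funext i
  refine Fin.lastCases ?_ (fun j => ?_) i
  · rw [Fin.succ_last]
    simp
  · rw [Fin.succ_castSucc]
    simp only [Fin.snoc_castSucc]

lemma term_eq_var {n : ℕ} (t : Language.order.Term (Empty ⊕ Fin n)) :
    ∃ i : Fin n, t = Term.var (Sum.inr i) := by
  cases t with
  | var s =>
    cases s with
    | inl e => exact isEmptyElim e
    | inr i => exact ⟨i, rfl⟩
  | func f ts => exact isEmptyElim f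


section MainLemma
variable {S : L → L} {m : L} (h : Good S m)
include h

lemma main : ∀ {n : ℕ} (φ : Language.order.BoundedFormula Empty n) (k : ℕ),
    qr φ ≤ k → ∀ (V : Fin (n + 1) → ℕ) (W : Fin (n + 1) → L), Ext S m k V W →
    (φ.Realize (fun e => e.elim) (fun i => W i.succ) ↔
      φ.Realize (fun e => e.elim) (fun i => V i.succ)) := by
  intro n φ
  induction φ with
  | falsum => intro k _ V W _; exact Iff.rfl
  | equal t₁ t₂ =>
    intro k _ V W hE
    obtain ⟨i, rfl⟩ := term_eq_var t₁
    obtain ⟨j, rfl⟩ := term_eq_var t₂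
    show W i.succ = W j.succ ↔ V i.succ = V j.succ
    constructor
    · intro hw
      exact le_antisymm ((ext_le_iff h hE _ _).mp hw.le) ((ext_le_iff h hE _ _).mp hw.ge)
    · intro hv
      exact le_antisymm ((ext_le_iff h hE _ _).mpr hv.le) ((ext_le_iff h hE _ _).mpr hv.ge)
  | rel R ts =>
    intro k _ V W hE
    cases R
    obtain ⟨i, hi⟩ := term_eq_var (ts 0)
    obtain ⟨j, hj⟩ := term_eq_var (ts 1)
    show ((ts 0).realize (Sum.elim (fun e => e.elim) fun r => W r.succ) ≤
        (ts 1).realize (Sum.elim (fun e => e.elim) fun r => W r.succ)) ↔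
      ((ts 0).realize (Sum.elim (fun e => e.elim) fun r => V r.succ) ≤
        (ts 1).realize (Sum.elim (fun e => e.elim) fun r => V r.succ))
    rw [hi, hj]
    simp only [Term.realize_var, Sum.elim_inr]
    exact ext_le_iff h hE i.succ j.succ
  | imp f g ihf ihg =>
    intro k hk V W hE
    have hk' : max (qr f) (qr g) ≤ k := by simpa [qr] using hk
    simp only [BoundedFormula.realize_imp]
    rw [ihf k (by omega) V W hE, ihg k (by omega) V W hE]
  | all f ihf =>
    intro k hk V W hE
    have hk' : qr f + 1 ≤ k := by simpa [qr] using hk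
    obtain ⟨k', rfl⟩ : ∃ k', k = k' + 1 := ⟨k - 1, by omega⟩
    simp only [BoundedFormula.realize_all]
    constructor
    · intro hL a
      obtain ⟨x, hx⟩ := forth h hE.2 hE.1 a
      have hiff := ihf k' (by omega) (Fin.snoc V a) (Fin.snoc W x) (ext_snoc h hE hx)
      rw [snoc_comp_succ, snoc_comp_succ] at hiff
      exact hiff.mp (hL x)
    · intro hN x
      obtain ⟨a, ha⟩ := back h hE.2 hE.1 x
      have hiff := ihf k' (by omega) (Fin.snoc V a) (Fin.snoc W x) (ext_snoc h hE ha)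
      rw [snoc_comp_succ, snoc_comp_succ] at hiff
      exact hiff.mpr (hN a)

end MainLemma

end OmegaAx

/-- Every linear order with a least element, in which every element has an
immediate successor and every non-minimal element has an immediate predecessor, is
elementarily equivalent to `⟨ω,<⟩`. -/
theorem finite_axiomatization_of_omega (L : Type*) [LinearOrder L]
    (hmin : ∃ m : L, ∀ x, m ≤ x)
    (hsucc : ∀ x : L, ∃ y, x < y ∧ ∀ z, x < z → y ≤ z)
    (hpred : ∀ x : L, (∃ z, z < x) → ∃ y, y < x ∧ ∀ z, z < x → z ≤ y) :
    L ≅[Language.order] ℕ := by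
  obtain ⟨m, hm⟩ := hmin
  choose S hS1 hS2 using hsucc
  have h : OmegaAx.Good S m := ⟨hS1, hS2, hm, hpred⟩
  rw [Language.elementarilyEquivalent_iff]
  intro φ
  have hmain := OmegaAx.main h φ (qr φ) le_rfl (fun _ => 0) (fun _ => m)
    ⟨⟨0, rfl, rfl⟩, fun i j _ => OmegaAx.Q_of_eq h (by simp)⟩
  unfold Sentence.Realize Formula.Realize
  convert hmain using 2
end
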